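/- Let P* be a row-stochastic matrix over S, let V₀, B₁ : S → ℝ with B₁(s) ≥ 0 for all s, let ε > 0, and define r* = (1 − γ·P*) *ᵥ V₀ + ε·B₁ (i.e., r* + γ·P* *ᵥ V₀ = V₀ + ε·B₁). Then the matrix 1 − γ·P* is invertible, the vector V* := (1 − γ·P*)⁻¹ *ᵥ r* satisfies V* = V₀ + ε·((1 − γ·P*)⁻¹ *ᵥ B₁), and for every d : S → ℝ with d(s) ≥ 0 for all s, one has ∑_s d(s)·V*(s) ≥ ∑_s d(s)·V₀(s). (Monotonic performance improvement of the bounded-ratio optimal policy, in matrix form.) -/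
import Mathlib

open Matrix

attribute [local instance] Matrix.linftyOpNormedRing Matrix.linftyOpNormedAlgebra

theorem stmt7 {S : Type*} [Fintype S] [Nonempty S] [DecidableEq S]
    (γ : ℝ) (hγ : γ ∈ Set.Ioo (0 : ℝ) 1)
    (Pstar : Matrix S S ℝ)
    (hPnn : ∀ s s', 0 ≤ Pstar s s') (hProw : ∀ s, ∑ s', Pstar s s' = 1)
    (V₀ B₁ : S → ℝ) (hB : ∀ s, 0 ≤ B₁ s) (ε : ℝ) (hε : 0 < ε)
    (rstar : S → ℝ) (hr : rstar = (1 - γ • Pstar) *ᵥ V₀ + ε • B₁) :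
    IsUnit (1 - γ • Pstar) ∧
    (1 - γ • Pstar)⁻¹ *ᵥ rstar = V₀ + ε • ((1 - γ • Pstar)⁻¹ *ᵥ B₁) ∧
    ∀ d : S → ℝ, (∀ s, 0 ≤ d s) →
      ∑ s, d s * V₀ s ≤ ∑ s, d s * ((1 - γ • Pstar)⁻¹ *ᵥ rstar) s := by
  obtain ⟨hγ0, hγ1⟩ := hγ
  have hnorm : ‖γ • Pstar‖ < 1 := by
    have key : ∀ i : S, ((∑ j, ‖(γ • Pstar) i j‖₊ : NNReal) : ℝ) = γ := by
      intro i
      push_cast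
      simp only [Matrix.smul_apply, smul_eq_mul, coe_nnnorm, Real.norm_eq_abs]
      have : ∀ j, |γ * Pstar i j| = γ * Pstar i j := by
        intro j
        exact abs_of_nonneg (mul_nonneg hγ0.le (hPnn i j))
      simp only [this, ← Finset.mul_sum, hProw i, mul_one]
    have key2 : ∀ i : S, (∑ j, ‖(γ • Pstar) i j‖₊ : NNReal) = γ.toNNReal := by
      intro i
      ext
      rw [key i, Real.coe_toNNReal _ hγ0.le]
    rw [Matrix.linfty_opNorm_def]
    have : (Finset.univ.sup fun i : S => ∑ j, ‖(γ • Pstar) i j‖₊) = γ.toNNReal := by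
      simp only [key2]
      exact Finset.sup_const Finset.univ_nonempty _
    rw [this, Real.coe_toNNReal _ hγ0.le]
    exact hγ1
  have hA : IsUnit (1 - γ • Pstar) := isUnit_one_sub_of_norm_lt_one hnorm
  have hdet : IsUnit (1 - γ • Pstar).det := (Matrix.isUnit_iff_isUnit_det _).mp hA
  have hinv : (1 - γ • Pstar)⁻¹ * (1 - γ • Pstar) = 1 := Matrix.nonsing_inv_mul _ hdet
  have h2 : (1 - γ • Pstar)⁻¹ *ᵥ rstar = V₀ + ε • ((1 - γ • Pstar)⁻¹ *ᵥ B₁) := by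
    rw [hr, Matrix.mulVec_add, Matrix.mulVec_smul, Matrix.mulVec_mulVec, hinv,
      Matrix.one_mulVec]
  refine ⟨hA, h2, ?_⟩
  -- nonnegativity of entries of powers
  have hpow : ∀ (n : ℕ) (i j : S), 0 ≤ ((γ • Pstar) ^ n) i j := by
    intro n
    induction n with
    | zero =>
      intro i j
      simp only [pow_zero, Matrix.one_apply]
      split <;> norm_num
    | succ n ih =>
      intro i j
      rw [pow_succ, Matrix.mul_apply]
      exact Finset.sum_nonneg fun k _ =>
        mul_nonneg (ih i k) (mul_nonneg hγ0.le (hPnn k j))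
  have hentry : ∀ i j : S, 0 ≤ (1 - γ • Pstar)⁻¹ i j := by
    intro i j
    have hs := hasSum_geom_series_inverse (γ • Pstar) hnorm
    have h3 : HasSum (fun n : ℕ => ((γ • Pstar) ^ n) i j)
        ((Ring.inverse (1 - γ • Pstar)) i j) :=
      hs.map (AddMonoidHom.mk' (fun M : Matrix S S ℝ => M i j) (fun _ _ => rfl))
        ((continuous_apply j).comp (continuous_apply i))
    rw [Matrix.nonsing_inv_eq_ringInverse]
    exact h3.nonneg fun n => hpow n i j
  intro d hd
  rw [h2]
  have : ∀ s, d s * V₀ s ≤ d s * (V₀ s + ε * ((1 - γ • Pstar)⁻¹ *ᵥ B₁) s) := by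
    intro s
    have hv : 0 ≤ ((1 - γ • Pstar)⁻¹ *ᵥ B₁) s :=
      Finset.sum_nonneg fun j _ => mul_nonneg (hentry s j) (hB j)
    nlinarith [hd s, mul_nonneg (hd s) (mul_nonneg hε.le hv)]
  exact Finset.sum_le_sum fun s _ => this s
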